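/- Let C = Σ_{p≥0} c_{p+1} be the sum of all left combs (solving C = Y + C/Y = Y + Y/C) and D = Σ_{q≥0} d_{q+1} the sum of all right combs (solving D = Y + D∖Y = Y + Y∖D). Then C + C∖D = D + C/D; both sides equal the sum of all trees of the shape c_p / Y ∖ d_q with p,q ≥ 0. -/

import Mathlib

/-- Planar binary trees: a leaf, or an internal vertex with two subtrees. -/
inductive PBT : Type
  | leaf : PBT
  | node : PBT → PBT → PBT
  deriving DecidableEq

namespace PBT

/-- Number of internal vertices of a planar binary tree. -/
def size : PBT → ℕ
  | leaf => 0
  | node l r => size l + size r + 1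

/-- `under u v` ("u ∖ v") grafts `v` at the rightmost leaf of `u`. -/
def under : PBT → PBT → PBT
  | leaf, v => v
  | node l r, v => node l (under r v)

/-- `over u v` ("u / v") grafts `u` at the leftmost leaf of `v`. -/
def over' (u : PBT) : PBT → PBT
  | leaf => u
  | node l r => node (over' u l) r

/-- Number of internal vertices on the rightmost path (right spine). -/
def rightSpine : PBT → ℕ
  | leaf => 0
  | node _ r => rightSpine r + 1

/-- The left comb with `p` internal vertices. -/
def leftComb : ℕ → PBT
  | 0 => leaf
  | p + 1 => node (leftComb p) leaf

/-- The right comb with `q` internal vertices. -/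
def rightComb : ℕ → PBT
  | 0 => leaf
  | q + 1 => node leaf (rightComb q)

/-- The list of all factorizations `t = u ∖ v` (each exactly once). -/
def underFactors : PBT → List (PBT × PBT)
  | leaf => [(leaf, leaf)]
  | node l r => (leaf, node l r) :: (underFactors r).map (fun p => (node l p.1, p.2))

/-- The list of all factorizations `t = u / v` (each exactly once). -/
def overFactors : PBT → List (PBT × PBT)
  | leaf => [(leaf, leaf)]
  | node l r => (node l r, leaf) :: (overFactors l).map (fun p => (p.1, node p.2 r))

/-- Convolution of tree-expanded series dual to the over product:
`(A / B)_w = Σ_{s / t = w} A_s B_t`. -/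
def overConv {R : Type*} [CommRing R] (f g : PBT → R) (w : PBT) : R :=
  ((overFactors w).map (fun p => f p.1 * g p.2)).sum

/-- Convolution of tree-expanded series dual to the under product:
`(A ∖ B)_w = Σ_{s ∖ t = w} A_s B_t`. -/
def underConv {R : Type*} [CommRing R] (f g : PBT → R) (w : PBT) : R :=
  ((underFactors w).map (fun p => f p.1 * g p.2)).sum

/-- The list of all planar binary trees with `n` internal vertices. -/
def treesOfSize : ℕ → List PBT
  | 0 => [leaf]
  | n + 1 =>
    (List.range (n + 1)).attach.flatMap (fun i =>
      (treesOfSize i.1).flatMap (fun l =>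
        (treesOfSize (n - i.1)).map (fun r => node l r)))
  termination_by n => n
  decreasing_by
  · exact Nat.lt_succ_of_le (Nat.sub_le _ _)
  · exact List.mem_range.mp i.2

/-- `treePow B t` is the series `B^t = μ_t(B,…,B)`, the substitution of the
series `B` in all internal vertices of `t` (duplicial operad composition),
using the decomposition `l ∨ r = (l / Y) ∖ r`. -/
def treePow {R : Type*} [CommRing R] (B : PBT → R) : PBT → PBT → R
  | leaf => fun w => if w = leaf then 1 else 0
  | node l r => underConv (overConv (treePow B l) B) (treePow B r)

/-- Composition of tree-expanded series: `(A ∘ B)_w = Σ_t A_t (B^t)_w`,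
where only trees with at most `|w|` vertices can contribute. -/
def comp {R : Type*} [CommRing R] (A B : PBT → R) (w : PBT) : R :=
  (((List.range (size w + 1)).flatMap treesOfSize).map
    (fun t => A t * treePow B t w)).sum

/-- The series reduced to the one-vertex tree `Y`. -/
def Yser {R : Type*} [CommRing R] : PBT → R :=
  fun t => if t = node leaf leaf then 1 else 0

/-- The series reduced to the root tree `|` (unit for the over/under products). -/
def unitSer {R : Type*} [CommRing R] : PBT → R :=
  fun t => if t = leaf then 1 else 0

/-- Suspension of a tree-expanded series: the coefficient on a tree with `n`
internal vertices is multiplied by `(-1)^(n-1)`. -/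
def susp {R : Type*} [CommRing R] (A : PBT → R) : PBT → R :=
  fun t => (-1 : R) ^ (size t + 1) * A t

/-- One covering step of the Tamari order: a right rotation
`(a ∨ b) ∨ c ⟶ a ∨ (b ∨ c)` somewhere in the tree. -/
inductive TamariStep : PBT → PBT → Prop
  | rot (a b c : PBT) : TamariStep (node (node a b) c) (node a (node b c))
  | left {l l' : PBT} (r : PBT) : TamariStep l l' → TamariStep (node l r) (node l' r)
  | right (l : PBT) {r r' : PBT} : TamariStep r r' → TamariStep (node l r) (node l r')

/-- The Tamari partial order on planar binary trees. -/
def tle : PBT → PBT → Prop := Relation.ReflTransGen TamariStep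

end PBT

open PBT in
/-- Test whether a tree is a left comb. -/
def isLeftComb : PBT → Bool
  | PBT.leaf => true
  | PBT.node l PBT.leaf => isLeftComb l
  | PBT.node _ (PBT.node _ _) => false

open PBT in
/-- Test whether a tree is a right comb. -/
def isRightComb : PBT → Bool
  | PBT.leaf => true
  | PBT.node PBT.leaf r => isRightComb r
  | PBT.node (PBT.node _ _) _ => false

open PBT in
/-- `C`: the sum of all nonempty left combs. -/
def Cser : PBT → ℚ := fun t => if t ≠ PBT.leaf ∧ isLeftComb t then 1 else 0

open PBT in
/-- `D`: the sum of all nonempty right combs. -/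
def Dser : PBT → ℚ := fun t => if t ≠ PBT.leaf ∧ isRightComb t then 1 else 0

open PBT in
/-- Indicator of trees of the shape `c_p / Y ∖ d_q = node c_p d_q`. -/
def isCombShape : PBT → Bool
  | PBT.leaf => false
  | PBT.node l r => isLeftComb l && isRightComb r

open PBT in
lemma sum_unit_right (h : PBT → ℚ) (t : PBT) :
    ((overFactors t).map (fun p => h p.1 * unitSer p.2)).sum = h t := by
  cases t with
  | leaf => simp [overFactors, unitSer]
  | node l r => simp [overFactors, unitSer, List.map_map, Function.comp_def]

open PBT in
lemma sum_unit_left (h : PBT → ℚ) (t : PBT) :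
    ((underFactors t).map (fun p => unitSer p.1 * h p.2)).sum = h t := by
  cases t with
  | leaf => simp [underFactors, unitSer]
  | node l r => simp [underFactors, unitSer, List.map_map, Function.comp_def]
open PBT in
lemma sum_Y_lc (t : PBT) :
    ((overFactors t).map (fun p => Yser p.1 *
      (if isLeftComb p.2 then (1:ℚ) else 0))).sum = Cser t := by
  induction t with
  | leaf => simp [overFactors, Yser, Cser]
  | node l r ihl ihr =>
    cases r with
    | leaf =>
      rw [overFactors]
      simp only [List.map_cons, List.sum_cons, List.map_map, Function.comp_def]
      have h1 : ∀ a : PBT, isLeftComb (PBT.node a PBT.leaf) = isLeftComb a := fun a => rfl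
      simp only [h1, ihl]
      cases l <;> simp [Yser, Cser, isLeftComb]
    | node rl rr =>
      rw [overFactors]
      simp [Yser, Cser, isLeftComb, List.map_map, Function.comp_def]

open PBT in
lemma sum_rc_Y (t : PBT) :
    ((underFactors t).map (fun p =>
      (if isRightComb p.1 then (1:ℚ) else 0) * Yser p.2)).sum = Dser t := by
  induction t with
  | leaf => simp [underFactors, Yser, Dser]
  | node l r ihl ihr =>
    cases l with
    | leaf =>
      rw [underFactors]
      simp only [List.map_cons, List.sum_cons, List.map_map, Function.comp_def]
      have h1 : ∀ a : PBT, isRightComb (PBT.node PBT.leaf a) = isRightComb a := fun a => rfl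
      simp only [h1, ihr]
      cases r <;> simp [Yser, Dser, isRightComb]
    | node ll lr =>
      rw [underFactors]
      simp [Yser, Dser, isRightComb, List.map_map, Function.comp_def]
open PBT in
lemma overConv_CY (l r : PBT) :
    overConv Cser Yser (PBT.node l r) = if r = PBT.leaf then Cser l else 0 := by
  cases r with
  | leaf =>
    rw [overConv, overFactors]
    simp only [List.map_cons, List.sum_cons, List.map_map, Function.comp_def]
    have h1 : ∀ a : PBT, Yser (PBT.node a PBT.leaf) = (unitSer a : ℚ) := by
      intro a; cases a <;> simp [Yser, unitSer]
    simp only [h1]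
    rw [sum_unit_right]
    simp [Yser]
  | node rl rr =>
    rw [overConv, overFactors]
    simp [Yser, List.map_map, Function.comp_def]

open PBT in
lemma overConv_YC (l r : PBT) :
    overConv Yser Cser (PBT.node l r) = if r = PBT.leaf then Cser l else 0 := by
  cases r with
  | leaf =>
    rw [overConv, overFactors]
    simp only [List.map_cons, List.sum_cons, List.map_map, Function.comp_def]
    have h1 : ∀ a : PBT, Cser (PBT.node a PBT.leaf) =
        (if isLeftComb a then (1:ℚ) else 0) := by
      intro a; simp [Cser, isLeftComb]
    simp only [h1]
    rw [sum_Y_lc]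
    simp [Cser]
  | node rl rr =>
    rw [overConv, overFactors]
    simp [Cser, isLeftComb, List.map_map, Function.comp_def]

open PBT in
lemma underConv_DY (l r : PBT) :
    underConv Dser Yser (PBT.node l r) = if l = PBT.leaf then Dser r else 0 := by
  cases l with
  | leaf =>
    rw [underConv, underFactors]
    simp only [List.map_cons, List.sum_cons, List.map_map, Function.comp_def]
    have h1 : ∀ a : PBT, Dser (PBT.node PBT.leaf a) =
        (if isRightComb a then (1:ℚ) else 0) := by
      intro a; simp [Dser, isRightComb]
    simp only [h1]
    rw [sum_rc_Y]
    simp [Dser]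
  | node ll lr =>
    rw [underConv, underFactors]
    simp [Dser, isRightComb, List.map_map, Function.comp_def]

open PBT in
lemma underConv_YD (l r : PBT) :
    underConv Yser Dser (PBT.node l r) = if l = PBT.leaf then Dser r else 0 := by
  cases l with
  | leaf =>
    rw [underConv, underFactors]
    simp only [List.map_cons, List.sum_cons, List.map_map, Function.comp_def]
    have h1 : ∀ a : PBT, Yser (PBT.node PBT.leaf a) = (unitSer a : ℚ) := by
      intro a; cases a <;> simp [Yser, unitSer]
    simp only [h1]
    rw [sum_unit_left]
    simp [Yser]
  | node ll lr =>
    rw [underConv, underFactors]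
    simp [Yser, List.map_map, Function.comp_def]

open PBT in
lemma underConv_CD (l r : PBT) :
    underConv Cser Dser (PBT.node l r) =
      (if isLeftComb l then (1:ℚ) else 0) * Dser r := by
  rw [underConv, underFactors]
  simp only [List.map_cons, List.sum_cons, List.map_map, Function.comp_def]
  have hC : ∀ a : PBT, Cser (PBT.node l a) =
      (if isLeftComb l then (1:ℚ) else 0) * unitSer a := by
    intro a; cases a <;> simp [Cser, isLeftComb, unitSer]
  simp only [hC, mul_assoc]
  rw [List.sum_map_mul_left, sum_unit_left]
  simp [Cser]

open PBT in
lemma overConv_CD (l r : PBT) :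
    overConv Cser Dser (PBT.node l r) =
      (if isRightComb r then (1:ℚ) else 0) * Cser l := by
  rw [overConv, overFactors]
  simp only [List.map_cons, List.sum_cons, List.map_map, Function.comp_def]
  have hD : ∀ a : PBT, Dser (PBT.node a r) =
      (if isRightComb r then (1:ℚ) else 0) * unitSer a := by
    intro a; cases a <;> simp [Dser, isRightComb, unitSer]
  have hcomm : ∀ p : PBT × PBT, Cser p.1 * Dser (PBT.node p.2 r) =
      (if isRightComb r then (1:ℚ) else 0) * (Cser p.1 * unitSer p.2) := by
    intro p; rw [hD]; ring
  simp only [hcomm]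
  rw [List.sum_map_mul_left, sum_unit_right]
  simp [Dser]
open PBT in
/-- `C` solves `C = Y + C/Y = Y + Y/C`, `D` solves
`D = Y + D∖Y = Y + Y∖D`, one has `C + C∖D = D + C/D`, and both sides are the
sum of all trees of the shape `c_p / Y ∖ d_q` with `p, q ≥ 0`. -/
theorem comb_series_identity :
    (∀ t : PBT, Cser t = Yser t + overConv Cser Yser t ∧
      Cser t = Yser t + overConv Yser Cser t) ∧
    (∀ t : PBT, Dser t = Yser t + underConv Dser Yser t ∧
      Dser t = Yser t + underConv Yser Dser t) ∧
    (∀ t : PBT,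
      Cser t + underConv Cser Dser t = Dser t + overConv Cser Dser t) ∧
    (∀ t : PBT,
      Cser t + underConv Cser Dser t = if isCombShape t then 1 else 0) := by
  have leafC : overConv Cser Yser PBT.leaf = 0 := by
    simp [overConv, overFactors, Cser]
  have leafC' : overConv Yser Cser PBT.leaf = 0 := by
    simp [overConv, overFactors, Cser]
  have leafD : underConv Dser Yser PBT.leaf = 0 := by
    simp [underConv, underFactors, Dser]
  have leafD' : underConv Yser Dser PBT.leaf = 0 := by
    simp [underConv, underFactors, Dser]
  have leafCD : underConv Cser Dser PBT.leaf = 0 := by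
    simp [underConv, underFactors, Dser]
  have leafCD' : overConv Cser Dser PBT.leaf = 0 := by
    simp [overConv, overFactors, Dser]
  refine ⟨fun t => ?_, fun t => ?_, fun t => ?_, fun t => ?_⟩
  · cases t with
    | leaf => simp [leafC, leafC', Cser, Yser]
    | node l r =>
      rw [overConv_CY, overConv_YC]
      constructor <;>
      · cases r with
        | leaf => cases l <;> simp [Cser, Yser, isLeftComb]
        | node rl rr => simp [Cser, Yser, isLeftComb]
  · cases t with
    | leaf => simp [leafD, leafD', Dser, Yser]
    | node l r =>
      rw [underConv_DY, underConv_YD]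
      constructor <;>
      · cases l with
        | leaf => cases r <;> simp [Dser, Yser, isRightComb]
        | node ll lr => simp [Dser, Yser, isRightComb]
  · cases t with
    | leaf => simp [leafCD, leafCD', Cser, Dser]
    | node l r =>
      rw [underConv_CD, overConv_CD]
      cases l <;> cases r <;>
        simp [Cser, Dser, isLeftComb, isRightComb] <;> split_ifs <;> simp_all
  · cases t with
    | leaf => simp [leafCD, Cser, isCombShape]
    | node l r =>
      rw [underConv_CD]
      cases r <;>
        simp [Cser, Dser, isCombShape, isLeftComb, isRightComb] <;>
          split_ifs <;> simp_all
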